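/- Let q ∈ K. The symmetric bilinear pairing on the K-vector space h_PP with basis the plane posets, given on basis elements by ⟨P,Q⟩_q = q^{φ(P,Q)} if ι(P) ≤ Q and 0 otherwise, is nondegenerate if, and only if, q ≠ 0. In particular, for q ≠ 0, for every nonzero linear combination x of plane posets of cardinality n there exists a plane poset Q of cardinality n with ⟨x,Q⟩_q ≠ 0, and for q = 0 the pairing is degenerate. -/

import Mathlib

open scoped TensorProduct
open scoped Classical

noncomputable section

/-- A plane poset structure on a set `α`: two partial orders `≤_h` (`hle`) and `≤_r` (`rle`)
such that two distinct elements are comparable for `≤_h` if and only if they are not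
comparable for `≤_r`. -/
structure PlanePoset (α : Type) where
  hle : α → α → Prop
  rle : α → α → Prop
  hle_refl : ∀ x, hle x x
  hle_antisymm : ∀ x y, hle x y → hle y x → x = y
  hle_trans : ∀ x y z, hle x y → hle y z → hle x z
  rle_refl : ∀ x, rle x x
  rle_antisymm : ∀ x y, rle x y → rle y x → x = y
  rle_trans : ∀ x y z, rle x y → rle y z → rle x z
  compat : ∀ x y, x ≠ y → ((hle x y ∨ hle y x) ↔ ¬ (rle x y ∨ rle y x))

namespace PlanePoset

variable {α β : Type}

/-- The induced (total) order `x ≤ y iff x ≤_h y or x ≤_r y`. -/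
def tle (P : PlanePoset α) (x y : α) : Prop := P.hle x y ∨ P.rle x y

/-- Transport of a plane poset structure along a bijection. -/
def map (e : α ≃ β) (P : PlanePoset α) : PlanePoset β where
  hle x y := P.hle (e.symm x) (e.symm y)
  rle x y := P.rle (e.symm x) (e.symm y)
  hle_refl x := P.hle_refl _
  hle_antisymm x y h1 h2 := e.symm.injective (P.hle_antisymm _ _ h1 h2)
  hle_trans x y z h1 h2 := P.hle_trans _ _ _ h1 h2
  rle_refl x := P.rle_refl _
  rle_antisymm x y h1 h2 := e.symm.injective (P.rle_antisymm _ _ h1 h2)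
  rle_trans x y z h1 h2 := P.rle_trans _ _ _ h1 h2
  compat x y hxy := P.compat _ _ fun h => hxy (e.symm.injective h)

@[simp] theorem map_hle (e : α ≃ β) (P : PlanePoset α) (x y : β) :
    (P.map e).hle x y ↔ P.hle (e.symm x) (e.symm y) := Iff.rfl

@[simp] theorem map_rle (e : α ≃ β) (P : PlanePoset α) (x y : β) :
    (P.map e).rle x y ↔ P.rle (e.symm x) (e.symm y) := Iff.rfl

/-- The composition `PQ` of two plane posets: `x ≤_r y` for every `x ∈ P`, `y ∈ Q`. -/
def comp (P : PlanePoset α) (Q : PlanePoset β) : PlanePoset (α ⊕ β) where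
  hle x y :=
    match x, y with
    | Sum.inl a, Sum.inl b => P.hle a b
    | Sum.inr a, Sum.inr b => Q.hle a b
    | _, _ => False
  rle x y :=
    match x, y with
    | Sum.inl a, Sum.inl b => P.rle a b
    | Sum.inr a, Sum.inr b => Q.rle a b
    | Sum.inl _, Sum.inr _ => True
    | Sum.inr _, Sum.inl _ => False
  hle_refl := by
    rintro (a | a)
    · exact P.hle_refl a
    · exact Q.hle_refl a
  hle_antisymm := by
    rintro (a | a) (b | b) h1 h2
    · exact congrArg Sum.inl (P.hle_antisymm a b h1 h2)
    · exact h1.elim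
    · exact h1.elim
    · exact congrArg Sum.inr (Q.hle_antisymm a b h1 h2)
  hle_trans := by
    rintro (a | a) (b | b) (c | c) h1 h2 <;>
      first
        | exact P.hle_trans _ _ _ h1 h2
        | exact Q.hle_trans _ _ _ h1 h2
        | exact h1.elim
        | exact h2.elim
  rle_refl := by
    rintro (a | a)
    · exact P.rle_refl a
    · exact Q.rle_refl a
  rle_antisymm := by
    rintro (a | a) (b | b) h1 h2
    · exact congrArg Sum.inl (P.rle_antisymm a b h1 h2)
    · exact h2.elim
    · exact h1.elim
    · exact congrArg Sum.inr (Q.rle_antisymm a b h1 h2)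
  rle_trans := by
    rintro (a | a) (b | b) (c | c) h1 h2 <;>
      first
        | exact P.rle_trans _ _ _ h1 h2
        | exact Q.rle_trans _ _ _ h1 h2
        | exact h1.elim
        | exact h2.elim
        | trivial
  compat := by
    rintro (a | a) (b | b) hne
    · exact P.compat a b fun h => hne (congrArg Sum.inl h)
    · show (False ∨ False) ↔ ¬ (True ∨ False)
      simp
    · show (False ∨ False) ↔ ¬ (False ∨ True)
      simp
    · exact Q.compat a b fun h => hne (congrArg Sum.inr h)

/-- The product `P ▷ Q` of two plane posets: `x ≤_h y` for every `x ∈ P`, `y ∈ Q`. -/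
def hcomp (P : PlanePoset α) (Q : PlanePoset β) : PlanePoset (α ⊕ β) where
  hle x y :=
    match x, y with
    | Sum.inl a, Sum.inl b => P.hle a b
    | Sum.inr a, Sum.inr b => Q.hle a b
    | Sum.inl _, Sum.inr _ => True
    | Sum.inr _, Sum.inl _ => False
  rle x y :=
    match x, y with
    | Sum.inl a, Sum.inl b => P.rle a b
    | Sum.inr a, Sum.inr b => Q.rle a b
    | _, _ => False
  hle_refl := by
    rintro (a | a)
    · exact P.hle_refl a
    · exact Q.hle_refl a
  hle_antisymm := by
    rintro (a | a) (b | b) h1 h2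
    · exact congrArg Sum.inl (P.hle_antisymm a b h1 h2)
    · exact h2.elim
    · exact h1.elim
    · exact congrArg Sum.inr (Q.hle_antisymm a b h1 h2)
  hle_trans := by
    rintro (a | a) (b | b) (c | c) h1 h2 <;>
      first
        | exact P.hle_trans _ _ _ h1 h2
        | exact Q.hle_trans _ _ _ h1 h2
        | exact h1.elim
        | exact h2.elim
        | trivial
  rle_refl := by
    rintro (a | a)
    · exact P.rle_refl a
    · exact Q.rle_refl a
  rle_antisymm := by
    rintro (a | a) (b | b) h1 h2
    · exact congrArg Sum.inl (P.rle_antisymm a b h1 h2)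
    · exact h1.elim
    · exact h1.elim
    · exact congrArg Sum.inr (Q.rle_antisymm a b h1 h2)
  rle_trans := by
    rintro (a | a) (b | b) (c | c) h1 h2 <;>
      first
        | exact P.rle_trans _ _ _ h1 h2
        | exact Q.rle_trans _ _ _ h1 h2
        | exact h1.elim
        | exact h2.elim
  compat := by
    rintro (a | a) (b | b) hne
    · exact P.compat a b fun h => hne (congrArg Sum.inl h)
    · show (True ∨ False) ↔ ¬ (False ∨ False)
      simp
    · show (False ∨ True) ↔ ¬ (False ∨ False)
      simp
    · exact Q.compat a b fun h => hne (congrArg Sum.inr h)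

/-- Restriction of a plane poset to a subset (a plane subposet). -/
def res (P : PlanePoset α) (s : Finset α) : PlanePoset {x : α // x ∈ s} where
  hle x y := P.hle x.1 y.1
  rle x y := P.rle x.1 y.1
  hle_refl x := P.hle_refl _
  hle_antisymm x y h1 h2 := Subtype.ext (P.hle_antisymm _ _ h1 h2)
  hle_trans x y z h1 h2 := P.hle_trans _ _ _ h1 h2
  rle_refl x := P.rle_refl _
  rle_antisymm x y h1 h2 := Subtype.ext (P.rle_antisymm _ _ h1 h2)
  rle_trans x y z h1 h2 := P.rle_trans _ _ _ h1 h2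
  compat x y hxy := P.compat _ _ fun h => hxy (Subtype.ext h)

/-- The involution `ι` exchanging the two partial orders. -/
def swap (P : PlanePoset α) : PlanePoset α where
  hle := P.rle
  rle := P.hle
  hle_refl := P.rle_refl
  hle_antisymm := P.rle_antisymm
  hle_trans := P.rle_trans
  rle_refl := P.hle_refl
  rle_antisymm := P.hle_antisymm
  rle_trans := P.hle_trans
  compat x y hxy := by
    have h := P.compat x y hxy
    tauto

end PlanePoset

/-- A plane poset structure on `Fin n` is canonical when the induced total order
is the usual order on `{1, …, n}`. -/
def IsCanon {n : ℕ} (P : PlanePoset (Fin n)) : Prop :=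
  ∀ x y : Fin n, (P.hle x y ∨ P.rle x y) ↔ x ≤ y

/-- `PP(n)`: (isoclasses of) plane posets of cardinality `n`, realized as the canonical
plane poset structures on `{1, …, n}`. -/
def CanonPP (n : ℕ) : Type := { P : PlanePoset (Fin n) // IsCanon P }

namespace CanonPP

/-- The empty plane poset, unit of both products. -/
def one : CanonPP 0 :=
  ⟨{ hle := fun _ _ => True
     rle := fun _ _ => True
     hle_refl := fun _ => trivial
     hle_antisymm := fun x => x.elim0
     hle_trans := fun _ _ _ _ _ => trivial
     rle_refl := fun _ => trivial
     rle_antisymm := fun x => x.elim0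
     rle_trans := fun _ _ _ _ _ => trivial
     compat := fun x => x.elim0 }, fun x => x.elim0⟩

/-- The composition `PQ` of plane posets, realized canonically. -/
def comp {k l : ℕ} (P : CanonPP k) (Q : CanonPP l) : CanonPP (k + l) :=
  ⟨(P.1.comp Q.1).map finSumFinEquiv, by
    intro x y
    obtain ⟨a, rfl⟩ := finSumFinEquiv.surjective x
    obtain ⟨b, rfl⟩ := finSumFinEquiv.surjective y
    simp only [PlanePoset.map_hle, PlanePoset.map_rle, Equiv.symm_apply_apply]
    rcases a with a | a <;> rcases b with b | b
    · show (P.1.hle a b ∨ P.1.rle a b) ↔ _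
      rw [P.2 a b, finSumFinEquiv_apply_left, finSumFinEquiv_apply_left]
      simp only [Fin.le_def, Fin.coe_castAdd]
      try omega
    · show (False ∨ True) ↔ _
      rw [finSumFinEquiv_apply_left, finSumFinEquiv_apply_right]
      have ha := a.isLt
      simp only [false_or, true_iff, Fin.le_def, Fin.coe_castAdd, Fin.coe_natAdd]
      omega
    · show (False ∨ False) ↔ _
      rw [finSumFinEquiv_apply_right, finSumFinEquiv_apply_left]
      have hb := b.isLt
      simp only [or_self, false_iff, Fin.le_def, Fin.coe_natAdd, Fin.coe_castAdd]
      omega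
    · show (Q.1.hle a b ∨ Q.1.rle a b) ↔ _
      rw [Q.2 a b, finSumFinEquiv_apply_right, finSumFinEquiv_apply_right]
      simp only [Fin.le_def, Fin.coe_natAdd]
      omega⟩

/-- The product `P ▷ Q` of plane posets, realized canonically. -/
def hcomp {k l : ℕ} (P : CanonPP k) (Q : CanonPP l) : CanonPP (k + l) :=
  ⟨(P.1.hcomp Q.1).map finSumFinEquiv, by
    intro x y
    obtain ⟨a, rfl⟩ := finSumFinEquiv.surjective x
    obtain ⟨b, rfl⟩ := finSumFinEquiv.surjective y
    simp only [PlanePoset.map_hle, PlanePoset.map_rle, Equiv.symm_apply_apply]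
    rcases a with a | a <;> rcases b with b | b
    · show (P.1.hle a b ∨ P.1.rle a b) ↔ _
      rw [P.2 a b, finSumFinEquiv_apply_left, finSumFinEquiv_apply_left]
      simp only [Fin.le_def, Fin.coe_castAdd]
      try omega
    · show (True ∨ False) ↔ _
      rw [finSumFinEquiv_apply_left, finSumFinEquiv_apply_right]
      have ha := a.isLt
      simp only [or_false, true_iff, Fin.le_def, Fin.coe_castAdd, Fin.coe_natAdd]
      omega
    · show (False ∨ False) ↔ _
      rw [finSumFinEquiv_apply_right, finSumFinEquiv_apply_left]
      have hb := b.isLt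
      simp only [or_self, false_iff, Fin.le_def, Fin.coe_natAdd, Fin.coe_castAdd]
      omega
    · show (Q.1.hle a b ∨ Q.1.rle a b) ↔ _
      rw [Q.2 a b, finSumFinEquiv_apply_right, finSumFinEquiv_apply_right]
      simp only [Fin.le_def, Fin.coe_natAdd]
      omega⟩

/-- Restriction of a plane poset to a plane subposet, realized canonically via the unique
increasing bijection. -/
def restrict {n : ℕ} (P : CanonPP n) (s : Finset (Fin n)) : CanonPP s.card :=
  ⟨(P.1.res s).map (s.orderIsoOfFin rfl).toEquiv.symm, by
    intro i j
    simp only [PlanePoset.map_hle, PlanePoset.map_rle, Equiv.symm_symm]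
    show (P.1.hle ((s.orderIsoOfFin rfl).toEquiv i).1 ((s.orderIsoOfFin rfl).toEquiv j).1 ∨
          P.1.rle ((s.orderIsoOfFin rfl).toEquiv i).1 ((s.orderIsoOfFin rfl).toEquiv j).1) ↔ i ≤ j
    rw [P.2]
    rw [Subtype.coe_le_coe]
    exact (s.orderIsoOfFin rfl).le_iff_le⟩

/-- The involution `ι`, on canonical plane posets. -/
def iota {n : ℕ} (P : CanonPP n) : CanonPP n :=
  ⟨P.1.swap, fun x y => by rw [or_comm]; exact P.2 x y⟩

end CanonPP

/-- The partial (weak Bruhat) order on `PP(n)`: `P ≤ Q` iff `x ≤_h y` in `Q` implies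
`x ≤_h y` in `P` (the increasing bijection between canonical representatives being
the identity). -/
def PPle {n : ℕ} (P Q : CanonPP n) : Prop :=
  ∀ x y : Fin n, Q.1.hle x y → P.1.hle x y

/-- Strict version of the order on `PP(n)`. -/
def PPlt {n : ℕ} (P Q : CanonPP n) : Prop := PPle P Q ∧ P ≠ Q

/-- Covering relation of the poset `(PP(n), ≤)`. -/
def PPcovBy {n : ℕ} (P Q : CanonPP n) : Prop :=
  PPlt P Q ∧ ∀ T : CanonPP n, PPlt P T → ¬ PPlt T Q

/-- `E(P) = {(i,j) | i <_h j}`. -/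
def Eset {n : ℕ} (P : CanonPP n) : Set (Fin n × Fin n) :=
  {p | P.1.hle p.1 p.2 ∧ p.1 ≠ p.2}

/-- A biideal of a plane poset: an ideal for both partial orders, equivalently an ideal
for the induced total order. -/
def IsBiideal {n : ℕ} (P : CanonPP n) (I : Finset (Fin n)) : Prop :=
  ∀ x y : Fin n, x ∈ I → (P.1.hle x y ∨ P.1.rle x y) → y ∈ I

/-- `h_s^t = #{(x,y) ∈ s × t | x <_h y}`. -/
def hNum {n : ℕ} (P : CanonPP n) (s t : Finset (Fin n)) : ℕ :=
  ((s ×ˢ t).filter (fun p : Fin n × Fin n => P.1.hle p.1 p.2 ∧ p.1 ≠ p.2)).card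

/-- `φ(P,Q) = #{(x,y) | x <_r y in P and x <_h y in Q} + #{(x,y) | x <_h y in P and
x <_r y in Q}` (via the identity increasing bijection). -/
def phi {n : ℕ} (P Q : CanonPP n) : ℕ :=
  (Finset.univ.filter (fun p : Fin n × Fin n =>
      (P.1.rle p.1 p.2 ∧ p.1 ≠ p.2) ∧ (Q.1.hle p.1 p.2 ∧ p.1 ≠ p.2))).card +
  (Finset.univ.filter (fun p : Fin n × Fin n =>
      (P.1.hle p.1 p.2 ∧ p.1 ≠ p.2) ∧ (Q.1.rle p.1 p.2 ∧ p.1 ≠ p.2))).card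

/-- The level `ℓ(P) = #{(x,y) | x <_r y}`. -/
def level {n : ℕ} (P : CanonPP n) : ℕ :=
  (Finset.univ.filter (fun p : Fin n × Fin n => P.1.rle p.1 p.2 ∧ p.1 ≠ p.2)).card

/-- The plane poset `P_σ = Ψ_n(σ)` associated to a permutation `σ`. -/
def PsiPerm {n : ℕ} (σ : Equiv.Perm (Fin n)) : CanonPP n :=
  ⟨{ hle := fun i j => i ≤ j ∧ σ.symm i ≤ σ.symm j
     rle := fun i j => i ≤ j ∧ σ.symm j ≤ σ.symm i
     hle_refl := fun x => ⟨le_refl x, le_refl _⟩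
     hle_antisymm := fun x y h1 h2 => le_antisymm h1.1 h2.1
     hle_trans := fun x y z h1 h2 => ⟨le_trans h1.1 h2.1, le_trans h1.2 h2.2⟩
     rle_refl := fun x => ⟨le_refl x, le_refl _⟩
     rle_antisymm := fun x y h1 h2 => le_antisymm h1.1 h2.1
     rle_trans := fun x y z h1 h2 => ⟨le_trans h1.1 h2.1, le_trans h2.2 h1.2⟩
     compat := by
       intro x y hxy
       have h1 : (x : ℕ) ≠ (y : ℕ) := fun h => hxy (Fin.ext h)
       have h2 : ((σ.symm x : Fin n) : ℕ) ≠ ((σ.symm y : Fin n) : ℕ) :=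
         fun h => hxy (σ.symm.injective (Fin.ext h))
       simp only [Fin.le_def]
       omega },
   by
     intro x y
     show ((x ≤ y ∧ σ.symm x ≤ σ.symm y) ∨ (x ≤ y ∧ σ.symm y ≤ σ.symm x)) ↔ x ≤ y
     simp only [Fin.le_def]
     omega⟩

/-- One step of the weak Bruhat order: exchange two consecutive letters `i < j`
(`i` appearing immediately before `j`) in the word `σ(1) ⋯ σ(n)`. -/
def bruhatStep {n : ℕ} (σ τ : Equiv.Perm (Fin n)) : Prop :=
  ∃ (i j k : Fin n) (hk : (k : ℕ) + 1 < n),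
    i < j ∧ σ k = i ∧ σ ⟨(k : ℕ) + 1, hk⟩ = j ∧ τ = Equiv.swap i j * σ

/-- The set of (isoclasses of) plane posets. -/
abbrev PPS : Type := Σ n : ℕ, CanonPP n

/-- Composition product on plane posets. -/
def PPS.comp (P Q : PPS) : PPS := ⟨P.1 + Q.1, P.2.comp Q.2⟩

/-- The product `▷` on plane posets. -/
def PPS.hcomp (P Q : PPS) : PPS := ⟨P.1 + Q.1, P.2.hcomp Q.2⟩

/-- Value of the coproduct `Δ_q` on a plane poset:
`Δ_q(P) = Σ_{I biideal of P} q^{h_{P∖I}^I} (P∖I) ⊗ I`. -/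
def deltaOn (K : Type) [Field K] (q : K) {n : ℕ} (P : CanonPP n) :
    (PPS →₀ K) ⊗[K] (PPS →₀ K) :=
  ∑ I ∈ Finset.univ.filter (fun I : Finset (Fin n) => IsBiideal P I),
    q ^ hNum P Iᶜ I •
      (Finsupp.single (⟨Iᶜ.card, P.restrict Iᶜ⟩ : PPS) (1 : K) ⊗ₜ[K]
        Finsupp.single (⟨I.card, P.restrict I⟩ : PPS) (1 : K))

/-- The coproduct `Δ_q` on `h_PP`, extended linearly. -/
def Delta (K : Type) [Field K] (q : K) :
    (PPS →₀ K) →ₗ[K] (PPS →₀ K) ⊗[K] (PPS →₀ K) :=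
  Finsupp.lift _ K PPS fun P => deltaOn K q P.2

/-- The composition product `m`, extended bilinearly to `h_PP`. -/
def mulPP (K : Type) [Field K] : (PPS →₀ K) →ₗ[K] (PPS →₀ K) →ₗ[K] (PPS →₀ K) :=
  Finsupp.lift _ K PPS fun P =>
    Finsupp.lift _ K PPS fun Q => Finsupp.single (PPS.comp P Q) 1

/-- The componentwise product on `h_PP ⊗ h_PP`. -/
def mulT (K : Type) [Field K] :
    ((PPS →₀ K) ⊗[K] (PPS →₀ K)) →ₗ[K] ((PPS →₀ K) ⊗[K] (PPS →₀ K)) →ₗ[K]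
      ((PPS →₀ K) ⊗[K] (PPS →₀ K)) :=
  TensorProduct.map₂ (mulPP K) (mulPP K)

/-- Multiplication of the basis element of a plane poset by `q^{n·c}` where `n` is its
cardinality. -/
def scale (K : Type) [Field K] (q : K) (c : ℕ) : (PPS →₀ K) →ₗ[K] (PPS →₀ K) :=
  Finsupp.lift _ K PPS fun P => q ^ (P.1 * c) • Finsupp.single P 1

/-- Right multiplication by a plane poset for the product `▷`. -/
def rmulH (K : Type) [Field K] (Q : PPS) : (PPS →₀ K) →ₗ[K] (PPS →₀ K) :=
  Finsupp.lift _ K PPS fun P => Finsupp.single (PPS.hcomp P Q) 1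

/-- Left multiplication by a plane poset for the product `▷`. -/
def lmulH (K : Type) [Field K] (P : PPS) : (PPS →₀ K) →ₗ[K] (PPS →₀ K) :=
  Finsupp.lift _ K PPS fun Q => Finsupp.single (PPS.hcomp P Q) 1

/-- The pairing on plane posets of the same cardinality:
`⟨P,Q⟩_q = q^{φ(P,Q)}` if `ι(P) ≤ Q`, and `0` otherwise. -/
def pairN (K : Type) [Field K] (q : K) {n : ℕ} (P Q : CanonPP n) : K :=
  if PPle (CanonPP.iota P) Q then q ^ phi P Q else 0

/-- The pairing `⟨-,-⟩_q` on plane posets (zero on posets of different cardinalities). -/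
def pairPP (K : Type) [Field K] (q : K) (P Q : PPS) : K :=
  if h : P.1 = Q.1 then pairN K q (cast (congrArg CanonPP h) P.2) Q.2 else 0

/-- The pairing `⟨-,-⟩_q`, extended bilinearly to `h_PP`. -/
def Bform (K : Type) [Field K] (q : K) : (PPS →₀ K) →ₗ[K] (PPS →₀ K) →ₗ[K] K :=
  Finsupp.lift _ K PPS fun P => Finsupp.lift K K PPS fun Q => pairPP K q P Q

/- ### Auxiliary lemmas -/

theorem PlanePoset.ext' {α : Type} {A B : PlanePoset α}
    (h1 : A.hle = B.hle) (h2 : A.rle = B.rle) : A = B := by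
  cases A; cases B; cases h1; cases h2; rfl

theorem rle_iff' {n : ℕ} (P : CanonPP n) {x y : Fin n} (hxy : x ≠ y) :
    P.1.rle x y ↔ (x ≤ y ∧ ¬ P.1.hle x y) := by
  constructor
  · intro h
    refine ⟨(P.2 x y).1 (Or.inr h), fun hh => ?_⟩
    exact (P.1.compat x y hxy).1 (Or.inl hh) (Or.inl h)
  · rintro ⟨hxle, hnh⟩
    rcases (P.2 x y).2 hxle with h | h
    · exact absurd h hnh
    · exact h

theorem hle_iff' {n : ℕ} (P : CanonPP n) {x y : Fin n} (hxy : x ≠ y) :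
    P.1.hle x y ↔ (x ≤ y ∧ ¬ P.1.rle x y) := by
  constructor
  · intro h
    refine ⟨(P.2 x y).1 (Or.inl h), fun hr => ?_⟩
    exact (P.1.compat x y hxy).1 (Or.inl h) (Or.inl hr)
  · rintro ⟨hxle, hnr⟩
    rcases (P.2 x y).2 hxle with h | h
    · exact h
    · exact absurd h hnr

theorem canon_ext {n : ℕ} {P Q : CanonPP n}
    (h : ∀ x y : Fin n, P.1.rle x y ↔ Q.1.rle x y) : P = Q := by
  have hh : ∀ x y : Fin n, P.1.hle x y ↔ Q.1.hle x y := by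
    intro x y
    by_cases hxy : x = y
    · subst hxy
      exact iff_of_true (P.1.hle_refl x) (Q.1.hle_refl x)
    · rw [hle_iff' P hxy, hle_iff' Q hxy, h x y]
  apply Subtype.ext
  apply PlanePoset.ext'
  · funext x y; exact propext (hh x y)
  · funext x y; exact propext (h x y)

theorem pairPP_mk {K : Type} [Field K] (q : K) {n : ℕ} (A B : CanonPP n) :
    pairPP K q ⟨n, A⟩ ⟨n, B⟩ = pairN K q A B := by
  simp [pairPP]

theorem Bform_apply {K : Type} [Field K] (q : K) (x y : PPS →₀ K) :
    Bform K q x y = x.sum fun P c => c * (y.sum fun Q d => d * pairPP K q P Q) := by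
  simp only [Bform, Finsupp.lift_apply, Finsupp.sum, LinearMap.sum_apply,
    LinearMap.smul_apply, smul_eq_mul]

theorem Bform_apply_single {K : Type} [Field K] (q : K) (x : PPS →₀ K) (Q₀ : PPS) :
    Bform K q x (Finsupp.single Q₀ 1) = x.sum fun P c => c * pairPP K q P Q₀ := by
  rw [Bform_apply]
  apply Finsupp.sum_congr
  intro P _
  rw [Finsupp.sum_single_index (by simp)]
  ring

/-- The plane poset on two elements with `0 <_h 1`. -/
def Hpp : CanonPP 2 :=
  ⟨{ hle := fun x y => x ≤ y
     rle := fun x y => x = y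
     hle_refl := fun x => le_refl x
     hle_antisymm := fun _ _ h1 h2 => le_antisymm h1 h2
     hle_trans := fun _ _ _ h1 h2 => le_trans h1 h2
     rle_refl := fun _ => rfl
     rle_antisymm := fun _ _ h1 _ => h1
     rle_trans := fun _ _ _ h1 h2 => h1.trans h2
     compat := by
       intro x y hxy
       constructor
       · rintro - (h | h)
         · exact hxy h
         · exact hxy h.symm
       · intro _; exact le_total x y },
   by
     intro x y
     constructor
     · rintro (h | h)
       · exact h
       · exact le_of_eq h
     · intro h; exact Or.inl h⟩

theorem pairPP_Hpp_zero {K : Type} [Field K] (Q : PPS) :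
    pairPP K (0 : K) ⟨2, Hpp⟩ Q = 0 := by
  obtain ⟨m, Qc⟩ := Q
  by_cases hm : 2 = m
  · subst hm
    rw [pairPP_mk]
    rw [pairN]
    split_ifs with h
    · -- `PPle (iota Hpp) Qc` forces `Qc.rle 0 1`, hence `phi Hpp Qc ≠ 0`
      have hnh : ¬ Qc.1.hle 0 1 := by
        intro hh
        have h01 : (0 : Fin 2) = 1 := h 0 1 hh
        exact absurd h01 (by decide)
      have hr : Qc.1.rle 0 1 := by
        rcases (Qc.2 0 1).2 (by decide) with hh | hh
        · exact absurd hh hnh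
        · exact hh
      have hphi : phi Hpp Qc ≠ 0 := by
        rw [phi]
        have hmem : ((0 : Fin 2), (1 : Fin 2)) ∈
            Finset.univ.filter (fun p : Fin 2 × Fin 2 =>
              (Hpp.1.hle p.1 p.2 ∧ p.1 ≠ p.2) ∧ (Qc.1.rle p.1 p.2 ∧ p.1 ≠ p.2)) :=
          Finset.mem_filter.2 ⟨Finset.mem_univ _,
            ⟨⟨(by decide : (0 : Fin 2) ≤ 1), by decide⟩, hr, by decide⟩⟩
        have hpos : 0 < (Finset.univ.filter (fun p : Fin 2 × Fin 2 =>
            (Hpp.1.hle p.1 p.2 ∧ p.1 ≠ p.2) ∧ (Qc.1.rle p.1 p.2 ∧ p.1 ≠ p.2))).card :=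
          Finset.card_pos.2 ⟨_, hmem⟩
        omega
      exact zero_pow hphi
    · rfl
  · rw [pairPP, dif_neg hm]

theorem level_subset_eq {n : ℕ} {A B : CanonPP n}
    (hsub : ∀ x y : Fin n, B.1.rle x y → A.1.rle x y)
    (hcard : level A ≤ level B) : A = B := by
  have hss : (Finset.univ.filter (fun p : Fin n × Fin n => B.1.rle p.1 p.2 ∧ p.1 ≠ p.2)) ⊆
      (Finset.univ.filter (fun p : Fin n × Fin n => A.1.rle p.1 p.2 ∧ p.1 ≠ p.2)) := by
    intro p hp
    rcases Finset.mem_filter.1 hp with ⟨_, h1, h2⟩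
    exact Finset.mem_filter.2 ⟨Finset.mem_univ _, hsub _ _ h1, h2⟩
  have heq := Finset.eq_of_subset_of_card_le hss hcard
  symm
  apply canon_ext
  intro x y
  by_cases hxy : x = y
  · subst hxy; exact iff_of_true (B.1.rle_refl x) (A.1.rle_refl x)
  · constructor
    · intro h
      have : (x, y) ∈ Finset.univ.filter
          (fun p : Fin n × Fin n => B.1.rle p.1 p.2 ∧ p.1 ≠ p.2) :=
        Finset.mem_filter.2 ⟨Finset.mem_univ _, h, hxy⟩
      rw [heq] at this
      exact (Finset.mem_filter.1 this).2.1
    · intro h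
      have : (x, y) ∈ Finset.univ.filter
          (fun p : Fin n × Fin n => A.1.rle p.1 p.2 ∧ p.1 ≠ p.2) :=
        Finset.mem_filter.2 ⟨Finset.mem_univ _, h, hxy⟩
      rw [← heq] at this
      exact (Finset.mem_filter.1 this).2.1

end

/-- The symmetric bilinear pairing `⟨−,−⟩_q` on `h_PP` is nondegenerate
if and only if `q ≠ 0`. -/
theorem statement16 (K : Type) [Field K] (q : K) :
    (∀ x : PPS →₀ K, (∀ y : PPS →₀ K, Bform K q x y = 0) → x = 0) ↔ q ≠ 0 := by
  constructor
  · -- nondegenerate → q ≠ 0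
    intro hnd hq0
    subst hq0
    have h0 := hnd (Finsupp.single (⟨2, Hpp⟩ : PPS) 1) ?_
    · exact one_ne_zero (Finsupp.single_eq_zero.1 h0)
    · intro y
      rw [Bform_apply, Finsupp.sum]
      apply Finset.sum_eq_zero
      intro P _
      by_cases hP : P = (⟨2, Hpp⟩ : PPS)
      · subst hP
        have hz : (y.sum fun Q d => d * pairPP K (0 : K) ⟨2, Hpp⟩ Q) = 0 := by
          rw [Finsupp.sum]
          apply Finset.sum_eq_zero
          intro Q _
          rw [pairPP_Hpp_zero, mul_zero]
        rw [hz, mul_zero]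
      · rw [Finsupp.single_eq_of_ne' (Ne.symm hP), zero_mul]
  · -- q ≠ 0 → nondegenerate
    intro hq x hx
    by_contra hx0
    obtain ⟨P₀, hP₀⟩ := Finsupp.support_nonempty_iff.2 hx0
    obtain ⟨n, P0c⟩ := P₀
    obtain ⟨Pm, hPmT, hmax⟩ := (x.support.filter (fun P : PPS => P.1 = n)).exists_max_image
      (fun P : PPS => level (P.2)) ⟨⟨n, P0c⟩, Finset.mem_filter.2 ⟨hP₀, rfl⟩⟩
    obtain ⟨m, Pc⟩ := Pm
    obtain ⟨hPmS, hmn⟩ := Finset.mem_filter.1 hPmT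
    dsimp at hmn
    subst hmn
    have key : ∀ P ∈ x.support, P ≠ (⟨m, Pc⟩ : PPS) →
        x P * pairPP K q P ⟨m, CanonPP.iota Pc⟩ = 0 := by
      rintro ⟨k, Ac⟩ hPsup hPne
      by_cases hk : k = m
      · subst hk
        have hAc : Ac ≠ Pc := fun h => hPne (by rw [h])
        rw [pairPP_mk, pairN, if_neg, mul_zero]
        intro hle
        apply hAc
        have hsub : ∀ u v : Fin k, Pc.1.rle u v → Ac.1.rle u v := fun u v h => hle u v h
        have hlev : level Ac ≤ level Pc :=
          hmax ⟨k, Ac⟩ (Finset.mem_filter.2 ⟨hPsup, rfl⟩)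
        exact level_subset_eq hsub hlev
      · rw [pairPP, dif_neg hk, mul_zero]
    have hB := hx (Finsupp.single (⟨m, CanonPP.iota Pc⟩ : PPS) 1)
    rw [Bform_apply_single, Finsupp.sum,
      Finset.sum_eq_single_of_mem (⟨m, Pc⟩ : PPS) hPmS key, pairPP_mk, pairN,
      if_pos (show PPle (CanonPP.iota Pc) (CanonPP.iota Pc) from fun _ _ h => h)] at hB
    exact mul_ne_zero (Finsupp.mem_support_iff.1 hPmS) (pow_ne_zero _ hq) hB
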